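/- arXiv:2605.04944 — 2 statements merged into one kernel-verified Lean document; each statement's English description precedes it below -/
import Mathlib

section
/- Let A be a square matrix over ℂ satisfying A³ = -4A. Then for all real t, exp(tA) = I + (sin(2t)/2)·A + ((1 - cos(2t))/4)·A². -/
open Matrix

theorem stmt2 {n : ℕ} (A : Matrix (Fin n) (Fin n) ℂ)
    (hA : A ^ 3 = (-4 : ℂ) • A) :
    ∀ t : ℝ, NormedSpace.exp ((t : ℂ) • A) =
      (1 : Matrix (Fin n) (Fin n) ℂ)
        + ((Real.sin (2 * t) / 2 : ℝ) : ℂ) • A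
        + (((1 - Real.cos (2 * t)) / 4 : ℝ) : ℂ) • A ^ 2 := by
  intro t
  letI : SeminormedRing (Matrix (Fin n) (Fin n) ℂ) := Matrix.linftyOpSemiNormedRing
  letI : NormedRing (Matrix (Fin n) (Fin n) ℂ) := Matrix.linftyOpNormedRing
  letI : NormedAlgebra ℂ (Matrix (Fin n) (Fin n) ℂ) := Matrix.linftyOpNormedAlgebra
  -- powers of A
  have hodd : ∀ k : ℕ, A ^ (2 * k + 1) = ((-4 : ℂ) ^ k) • A := by
    intro k
    induction k with
    | zero => simp
    | succ k ih =>
      have h1 : 2 * (k + 1) + 1 = (2 * k + 1) + 2 := by ring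
      have h3 : A * A ^ 2 = A ^ 3 := (pow_succ' A 2).symm
      rw [h1, pow_add, ih, smul_mul_assoc, h3, hA, smul_smul, ← pow_succ]
  have heven : ∀ k : ℕ, A ^ (2 * k + 2) = ((-4 : ℂ) ^ k) • A ^ 2 := by
    intro k
    have : 2 * k + 2 = (2 * k + 1) + 1 := by ring
    rw [this, pow_succ, hodd k, smul_mul_assoc, ← pow_two]
  set F : ℕ → Matrix (Fin n) (Fin n) ℂ :=
    fun m => ((Nat.factorial m : ℂ)⁻¹ * (t : ℂ) ^ m) • A ^ m with hF
  -- scalar series for sin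
  have hsin : HasSum (fun k : ℕ => (Nat.factorial (2 * k + 1) : ℂ)⁻¹ * (t : ℂ) ^ (2 * k + 1) * (-4 : ℂ) ^ k)
      (Complex.sin (2 * t) / 2) := by
    have h := (Complex.hasSum_sin ((2 * t : ℝ) : ℂ)).div_const 2
    convert h using 2 with k
    case e'_3 => rfl
    case e'_6 => norm_cast
    have h4 : ((-4 : ℂ)) ^ k = (-1 : ℂ) ^ k * 2 ^ (2 * k) := by
      rw [show (-4 : ℂ) = (-1) * 2 ^ 2 by norm_num, mul_pow, ← pow_mul]
    have h2t : (((2 * t : ℝ)) : ℂ) ^ (2 * k + 1) = 2 ^ (2 * k + 1) * (t : ℂ) ^ (2 * k + 1) := by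
      push_cast
      rw [mul_pow]
    rw [h2t, h4]
    have hfac : (Nat.factorial (2 * k + 1) : ℂ) ≠ 0 := by exact_mod_cast Nat.factorial_ne_zero _
    field_simp
    ring
  -- scalar series for (1 - cos)/4
  have hcos : HasSum (fun k : ℕ => (Nat.factorial (2 * k + 2) : ℂ)⁻¹ * (t : ℂ) ^ (2 * k + 2) * (-4 : ℂ) ^ k)
      ((1 - Complex.cos (2 * t)) / 4) := by
    have h := Complex.hasSum_cos ((2 * t : ℝ) : ℂ)
    have h1 : HasSum (fun k : ℕ =>
        (-1 : ℂ) ^ (k + 1) * (((2 * t : ℝ)) : ℂ) ^ (2 * (k + 1)) / (Nat.factorial (2 * (k + 1)) : ℂ))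
        (Complex.cos (2 * t) - 1) := by
      refine (hasSum_nat_add_iff (f := fun k : ℕ =>
        (-1 : ℂ) ^ k * (((2 * t : ℝ)) : ℂ) ^ (2 * k) / (Nat.factorial (2 * k) : ℂ)) 1).mpr ?_
      convert h using 1
      case e'_3 => rfl
      simp [Finset.sum_range_one]
    have h2 := h1.div_const (-4)
    have : (Complex.cos (2 * t) - 1) / (-4) = (1 - Complex.cos (2 * t)) / 4 := by ring
    rw [this] at h2
    convert h2 using 2 with k
    case e'_3 => rfl
    have h4 : ((-4 : ℂ)) ^ k = (-1 : ℂ) ^ k * 2 ^ (2 * k) := by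
      rw [show (-4 : ℂ) = (-1) * 2 ^ 2 by norm_num, mul_pow, ← pow_mul]
    have h2t : (((2 * t : ℝ)) : ℂ) ^ (2 * (k + 1)) = 2 ^ (2 * (k + 1)) * (t : ℂ) ^ (2 * (k + 1)) := by
      push_cast
      rw [mul_pow]
    have hidx : 2 * (k + 1) = 2 * k + 2 := by ring
    rw [h2t, h4, hidx]
    have hfac : (Nat.factorial (2 * k + 2) : ℂ) ≠ 0 := by exact_mod_cast Nat.factorial_ne_zero _
    field_simp
    ring
  -- matrix sums
  have hoddsum : HasSum (fun k : ℕ => F (2 * k + 1)) ((Complex.sin (2 * t) / 2) • A) := by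
    have := hsin.smul_const A
    convert this using 2 with k
    rw [hF]
    simp only [hodd k, smul_smul]
  have hevensum : HasSum (fun k : ℕ => F (2 * k))
      (((1 - Complex.cos (2 * t)) / 4) • A ^ 2 + 1) := by
    have hshift : HasSum (fun k : ℕ => F (2 * (k + 1)))
        (((1 - Complex.cos (2 * t)) / 4) • A ^ 2) := by
      have := hcos.smul_const (A ^ 2)
      convert this using 2 with k
      rw [hF]
      simp only [show 2 * (k + 1) = 2 * k + 2 from by ring, heven k, smul_smul]
    have := (hasSum_nat_add_iff (f := fun k : ℕ => F (2 * k)) 1).mp hshift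
    convert this using 1
    case e'_3 => rfl
    rw [hF]
    simp [Finset.sum_range_one]
  have hFsum : HasSum F
      ((((1 - Complex.cos (2 * t)) / 4) • A ^ 2 + 1) + (Complex.sin (2 * t) / 2) • A) :=
    HasSum.even_add_odd hevensum hoddsum
  have hexp : NormedSpace.exp ((t : ℂ) • A)
      = ∑' m : ℕ, ((Nat.factorial m : ℂ))⁻¹ • ((t : ℂ) • A) ^ m := by
    rw [NormedSpace.exp_eq_tsum ℂ]
  have hterm : ∀ m : ℕ, ((Nat.factorial m : ℂ))⁻¹ • ((t : ℂ) • A) ^ m = F m := by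
    intro m
    rw [hF]
    simp only [smul_pow, smul_smul]
  rw [hexp, tsum_congr hterm, hFsum.tsum_eq, Complex.ofReal_div, Complex.ofReal_div, Complex.ofReal_sin,
    Complex.ofReal_sub, Complex.ofReal_cos]
  push_cast
  abel
end

section
/- Let k and p be nonzero real numbers and let A be the 3×3 real matrix with nonzero entries A₁₂ = -2/k, A₂₁ = k, A₂₃ = -2/p, A₃₂ = p. Then for every real t, exp(tA) equals the matrix with rows (cos²t, -(1/k)sin(2t), (2/(kp))sin²t), ((k/2)sin(2t), cos(2t), -(1/p)sin(2t)), ((kp/2)sin²t, (p/2)sin(2t), cos²t). -/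
open Matrix NormedSpace

section Aux

attribute [local instance] Matrix.linftyOpNormedAddCommGroup Matrix.linftyOpNormedRing
  Matrix.linftyOpNormedAlgebra

/-- If `A³ = -4 A` then `exp (t A) = 1 + (sin 2t / 2) A + ((1 - cos 2t)/4) A²`. -/
theorem exp_smul_of_cube (A : Matrix (Fin 3) (Fin 3) ℝ) (hA3 : A * (A * A) = (-4 : ℝ) • A)
    (t : ℝ) :
    NormedSpace.exp (t • A) =
      1 + (Real.sin (2*t)/2) • A + ((1 - Real.cos (2*t))/4) • (A*A) := by
  set F : ℝ → Matrix (Fin 3) (Fin 3) ℝ :=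
    fun t => 1 + (Real.sin (2*t)/2) • A + ((1 - Real.cos (2*t))/4) • (A*A) with hF
  have hder : ∀ s : ℝ, HasDerivAt F (A * F s) s := by
    intro s
    have h2t : HasDerivAt (fun t : ℝ => 2*t) 2 s := by
      simpa using (hasDerivAt_id s).const_mul (2 : ℝ)
    have h1 : HasDerivAt (fun t : ℝ => Real.sin (2*t)/2) (Real.cos (2*s)) s := by
      have := ((Real.hasDerivAt_sin (2*s)).comp s h2t).div_const 2
      simpa [mul_comm, mul_div_assoc] using this
    have h2 : HasDerivAt (fun t : ℝ => (1 - Real.cos (2*t))/4) (Real.sin (2*s)/2) s := by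
      have := (((Real.hasDerivAt_cos (2*s)).comp s h2t).const_sub 1).div_const 4
      refine this.congr_deriv ?_
      ring
    have hd : HasDerivAt F (Real.cos (2*s) • A + (Real.sin (2*s)/2) • (A*A)) s := by
      have := ((hasDerivAt_const s (1 : Matrix (Fin 3) (Fin 3) ℝ)).add
        (h1.smul_const A)).add (h2.smul_const (A*A))
      rw [zero_add] at this
      exact this
    convert hd using 1
    have : A * F s = A + (Real.sin (2*s)/2) • (A*A) + ((1 - Real.cos (2*s))/4) • (A*(A*A)) := by
      simp [hF, mul_add, Matrix.mul_smul]
    rw [this, hA3, smul_smul]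
    module
  have key : ∀ s : ℝ, exp (s • (-A)) * F s = 1 := by
    have hzero : ∀ s : ℝ, HasDerivAt (fun u => exp (u • (-A)) * F u) 0 s := by
      intro s
      have he : HasDerivAt (fun u : ℝ => exp (u • (-A))) (-A * exp (s • (-A))) s :=
        hasDerivAt_exp_smul_const' (-A) s
      have := he.mul (hder s)
      refine this.congr_deriv ?_
      have hc : Commute (-A) (exp (s • (-A))) :=
        (Commute.refl (-A)).smul_right s |>.exp_right
      rw [hc.eq]
      rw [mul_assoc, ← mul_add]
      simp [neg_mul]
    have hconst : ∀ s : ℝ, (fun u => exp (u • (-A)) * F u) s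
        = (fun u => exp (u • (-A)) * F u) 0 :=
      fun s => is_const_of_deriv_eq_zero
        (fun u => ((hzero u).differentiableAt))
        (fun u => (hzero u).deriv) s 0
    intro s
    have := hconst s
    simp only at this
    rw [this]
    simp [hF, exp_zero]
  have hcomm : Commute (t • A) (t • (-A)) := by
    apply Commute.smul_left; apply Commute.smul_right
    simp [Commute, SemiconjBy, mul_neg, neg_mul]
  have hinv : exp (t • A) * exp (t • (-A)) = 1 := by
    refine (exp_add_of_commute hcomm).symm.trans ?_
    simp
  calc exp (t • A) = exp (t • A) * 1 := by rw [mul_one]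
  _ = exp (t • A) * (exp (t • (-A)) * F t) := by rw [key t]
  _ = (exp (t • A) * exp (t • (-A))) * F t := by rw [mul_assoc]
  _ = F t := by rw [hinv, one_mul]

end Aux

theorem stmt5 (k p : ℝ) (hk : k ≠ 0) (hp : p ≠ 0)
    (A : Matrix (Fin 3) (Fin 3) ℝ)
    (hA : A = !![0, -2/k, 0; k, 0, -2/p; 0, p, 0]) :
    ∀ t : ℝ, NormedSpace.exp (t • A) =
      !![Real.cos t ^ 2,          -(1/k) * Real.sin (2*t),  (2/(k*p)) * Real.sin t ^ 2;
         (k/2) * Real.sin (2*t),  Real.cos (2*t),           -(1/p) * Real.sin (2*t);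
         (k*p/2) * Real.sin t ^ 2, (p/2) * Real.sin (2*t),  Real.cos t ^ 2] := by
  have hAA : A * A = !![-2, 0, 4/(k*p); 0, -4, 0; k*p, 0, -2] := by
    subst hA
    ext i j
    fin_cases i <;> fin_cases j <;>
      · simp [Matrix.mul_apply, Fin.sum_univ_succ]
        try field_simp
        try ring
        try tauto
  have hA3 : A * (A * A) = (-4 : ℝ) • A := by
    rw [hAA]
    subst hA
    ext i j
    fin_cases i <;> fin_cases j <;>
      · simp [Matrix.mul_apply, Fin.sum_univ_succ]
        try field_simp
        try ring
        try tauto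
  intro t
  rw [exp_smul_of_cube A hA3 t, hAA, hA]
  ext i j
  fin_cases i <;> fin_cases j <;>
    · simp [Matrix.one_apply, Real.cos_two_mul, Real.sin_sq]
      try field_simp
      try ring
end
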